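/- Let L_RCM ⊆ {a,b}* consist of all words w with |w|_a = 0 (i.e., all words b^n, n ≥ 0) together with all words w with |w|_a ≥ 1 whose |w|_a-th character (1-indexed) is b. Then L_RCM is strongly counting-regular: for every regular language R ⊆ {a,b}*, the language L_RCM ∩ R is counting-regular. -/

import Mathlib

/-- The counting function of a language: the number of words of length `n`. -/
noncomputable def countFn {α : Type*} (L : Set (List α)) (n : ℕ) : ℕ :=
  Set.ncard {w | w ∈ L ∧ w.length = n}

/-- A language is regular if it is accepted by a DFA with finitely many states. -/
def IsRegularLang {α : Type*} (L : Set (List α)) : Prop :=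
  ∃ (σ : Type) (_ : Fintype σ) (M : DFA α σ), ∀ w, w ∈ M.accepts ↔ w ∈ L

/-- A language is counting-regular if some regular language over a (possibly different)
finite alphabet has the same counting function. -/
def CountingRegular {α : Type*} (L : Set (List α)) : Prop :=
  ∃ (β : Type) (_ : Fintype β) (L' : Set (List β)),
    IsRegularLang L' ∧ ∀ n, countFn L' n = countFn L n


/-- `L_RCM ⊆ {a,b}*` (here `a = 0`, `b = 1`): all words with no `a`, together with all
words `w` with `|w|_a ≥ 1` whose `|w|_a`-th character (1-indexed) is `b`. -/
def LRCM : Set (List (Fin 2)) :=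
  {w | w.count 0 = 0 ∨ (1 ≤ w.count 0 ∧ w[w.count 0 - 1]? = some 1)}

namespace SCR

/-- Canonical shuffle of the two parts `x` and `y`. -/
def sh : Bool → List (Fin 2) → List (Fin 2) → List (Fin 2)
  | true, x, [] => x
  | false, [], y => y
  | true, x, c :: y => c :: sh (!decide (c = 0)) x y
  | false, c :: x, y => c :: sh (!decide (c = 0)) x y
termination_by m x y => x.length + y.length

lemma sh_length : ∀ (m : Bool) (x y : List (Fin 2)), (sh m x y).length = x.length + y.length
  | true, x, [] => by simp [sh]
  | false, [], y => by simp [sh]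
  | true, x, c :: y => by
      simp only [sh, List.length_cons, sh_length (!decide (c = 0)) x y]; omega
  | false, c :: x, y => by
      simp only [sh, List.length_cons, sh_length (!decide (c = 0)) x y]; omega
termination_by m x y => x.length + y.length

lemma fin2 (c : Fin 2) : c = 0 ∨ c = 1 := by omega

@[simp] lemma count0_cons0 (l : List (Fin 2)) : ((0:Fin 2) :: l).count 0 = l.count 0 + 1 := by
  simp [List.count_cons]
@[simp] lemma count0_cons1 (l : List (Fin 2)) : ((1:Fin 2) :: l).count 0 = l.count 0 := by
  simp [List.count_cons]
@[simp] lemma count1_cons0 (l : List (Fin 2)) : ((0:Fin 2) :: l).count 1 = l.count 1 := by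
  simp [List.count_cons]
@[simp] lemma count1_cons1 (l : List (Fin 2)) : ((1:Fin 2) :: l).count 1 = l.count 1 + 1 := by
  simp [List.count_cons]

/-- Ghost parse state: (phase, pending letter, x-part so far, y-part so far). -/
abbrev GS := Bool × Option (Fin 2) × List (Fin 2) × List (Fin 2)

def gstep : GS → Fin 2 → GS
  | (ph, none, gx, gy), c => (ph || decide (c = 0), some c, gx, gy)
  | (ph, some p, gx, gy), c =>
      if ph = true ∧ c = 0 then (true, some c, p :: gx, gy)
      else (ph || decide (c = 0), some c, gx, p :: gy)

/-- Parse of `σ`: fold from the right. -/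
def G (σ : List (Fin 2)) : GS := σ.foldr (fun c s => gstep s c) (false, none, [], [])

@[simp] lemma G_nil : G [] = (false, none, [], []) := rfl
@[simp] lemma G_cons (c : Fin 2) (σ : List (Fin 2)) : G (c :: σ) = gstep (G σ) c := rfl

def pcons : Option (Fin 2) → List (Fin 2) → List (Fin 2)
  | none, l => l
  | some p, l => p :: l

lemma sh_all1 : ∀ z : List (Fin 2), z.count 0 = 0 → sh true [] z = z := by
  intro z
  induction z with
  | nil => simp [sh]
  | cons d z' ihz =>
    intro hz
    rcases fin2 d with hd | hd
    · subst hd; simp at hz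
    · subst hd
      simp only [List.count_cons] at hz
      have hz' : z'.count 0 = 0 := by simpa using hz
      simp [sh, ihz hz']

lemma G_pend_some (c : Fin 2) (σ : List (Fin 2)) : ∃ p, (G (c :: σ)).2.1 = some p := by
  rw [G_cons]
  rcases G σ with ⟨ph, _ | p, gx, gy⟩
  · exact ⟨c, rfl⟩
  · by_cases h : ph = true ∧ c = 0
    · exact ⟨c, by simp [gstep, if_pos h]⟩
    · exact ⟨c, by simp [gstep, if_neg h]⟩

/-- Claim A : every word is canonically the shuffle of its parse. -/
lemma claimA (σ : List (Fin 2)) :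
    ((G σ).1 = true ↔ (0 : Fin 2) ∈ σ) ∧
    sh true (G σ).2.2.1 (pcons (G σ).2.1 (G σ).2.2.2) = σ ∧
    ((0 : Fin 2) ∈ σ →
      (pcons (G σ).2.1 (G σ).2.2.2).count 0 = (G σ).2.2.1.count 1 + 1) ∧
    ((0 : Fin 2) ∉ σ → (G σ).2.2.1 = [] ∧ (pcons (G σ).2.1 (G σ).2.2.2).count 0 = 0) := by
  induction σ with
  | nil => simp [pcons, sh]
  | cons c σ' ih =>
    rcases hG : G σ' with ⟨ph, pend, gx, gy⟩
    rw [hG] at ih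
    obtain ⟨ih1, ih2, ih3, ih4⟩ := ih
    replace ih1 : ph = true ↔ (0:Fin 2) ∈ σ' := ih1
    replace ih2 : sh true gx (pcons pend gy) = σ' := ih2
    replace ih3 : (0:Fin 2) ∈ σ' → (pcons pend gy).count 0 = gx.count 1 + 1 := ih3
    replace ih4 : (0:Fin 2) ∉ σ' → gx = [] ∧ (pcons pend gy).count 0 = 0 := ih4
    cases pend with
    | none =>
      -- σ' = []
      have hσ' : σ' = [] := by
        cases σ' with
        | nil => rfl
        | cons d σ'' =>
          obtain ⟨p, hp⟩ := G_pend_some d σ''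
          rw [hG] at hp; simp at hp
      subst hσ'
      have hG' : ph = false ∧ gx = [] ∧ gy = [] := by
        rw [G_nil] at hG
        simpa [Prod.ext_iff] using hG.symm
      obtain ⟨h1, h2, h3⟩ := hG'
      subst h1; subst h2; subst h3
      rcases fin2 c with hc | hc <;> subst hc <;>
        simp [G_cons, gstep, pcons, sh]
    | some p =>
      simp only [G_cons, hG]
      by_cases hbr : ph = true ∧ c = 0
      · obtain ⟨hph, hc⟩ := hbr
        subst hc; subst hph
        have h0σ' : (0 : Fin 2) ∈ σ' := ih1.mp rfl
        have hstep : gstep (true, some p, gx, gy) 0 = (true, some 0, p :: gx, gy) := by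
          simp [gstep]
        rw [hstep]
        refine ⟨by simp, ?_, ?_, ?_⟩
        · show sh true (p :: gx) (0 :: gy) = 0 :: σ'
          rw [← ih2]
          show sh true (p :: gx) (0 :: gy) = 0 :: sh true gx (p :: gy)
          rcases fin2 p with hp | hp <;> subst hp <;> simp [sh, pcons]
        · intro _
          have h3 := ih3 h0σ'
          show (0 :: gy).count 0 = (p :: gx).count 1 + 1
          simp only [pcons] at h3
          rcases fin2 p with hp | hp <;> subst hp <;> simp at h3 ⊢ <;> omega
        · intro h; exact absurd (by simp : (0:Fin 2) ∈ 0 :: σ') h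
      · have hstep : gstep (ph, some p, gx, gy) c
            = (ph || decide (c = 0), some c, gx, p :: gy) := by
          simp only [gstep]; rw [if_neg hbr]
        rw [hstep]
        rcases fin2 c with hc | hc
        · -- c = 0, hence ph = false
          subst hc
          have hph : ph = false := by
            cases ph
            · rfl
            · exact absurd ⟨rfl, rfl⟩ hbr
          subst hph
          have h0σ' : (0 : Fin 2) ∉ σ' := by
            intro h
            exact Bool.false_ne_true (ih1.mpr h)
          obtain ⟨hgx, hcnt⟩ := ih4 h0σ'
          subst hgx
          simp only [pcons] at hcnt
          refine ⟨by simp, ?_, ?_, ?_⟩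
          · show sh true [] (0 :: p :: gy) = 0 :: σ'
            rw [← ih2]
            show sh true [] (0 :: p :: gy) = 0 :: sh true [] (p :: gy)
            rw [sh_all1 (p :: gy) hcnt]
            simp [sh]
          · intro _
            show (0 :: p :: gy).count 0 = List.count 1 [] + 1
            rcases fin2 p with hp | hp <;> subst hp <;> simp at hcnt ⊢ <;> omega
          · intro h; exact absurd (by simp : (0:Fin 2) ∈ 0 :: σ') h
        · -- c = 1
          subst hc
          refine ⟨by simpa using ih1, ?_, ?_, ?_⟩
          · show sh true gx (1 :: p :: gy) = 1 :: σ'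
            rw [← ih2]
            simp [sh, pcons]
          · intro h0
            have h0' : (0:Fin 2) ∈ σ' := by simpa using h0
            have h3 := ih3 h0'
            show (1 :: p :: gy).count 0 = gx.count 1 + 1
            simp only [pcons] at h3
            rcases fin2 p with hp | hp <;> subst hp <;> simp at h3 ⊢ <;> omega
          · intro h0
            have h0' : (0:Fin 2) ∉ σ' := fun h => h0 (by simp [h])
            obtain ⟨hgx, hcnt⟩ := ih4 h0'
            refine ⟨hgx, ?_⟩
            show (1 :: p :: gy).count 0 = 0
            simp only [pcons] at hcnt
            rcases fin2 p with hp | hp <;> subst hp <;> simp at hcnt ⊢ <;> omega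


@[simp] lemma f2one_ne_zero : ¬((1:Fin 2) = 0) := by decide

lemma G_all1 : ∀ z : List (Fin 2), z.count 0 = 0 →
    G z = match z with
      | [] => (false, none, [], [])
      | h :: t => (false, some h, [], t) := by
  intro z
  induction z with
  | nil => simp
  | cons d z' ihz =>
    intro hz
    rcases fin2 d with hd | hd
    · subst hd; simp at hz
    · subst hd
      have hz' : z'.count 0 = 0 := by simpa using hz
      rw [G_cons, ihz hz']
      cases z' with
      | nil => simp [gstep]
      | cons h t => simp [gstep]

lemma L1 (N : ℕ) : ∀ (x y : List (Fin 2)), x.length + y.length ≤ N →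
    (y.count 0 = x.count 1 + 1 →
       ∃ h t, y = h :: t ∧ G (sh true x y) = (true, some h, x, t)) ∧
    (y.count 0 = x.count 1 →
       G (sh false x y) =
         match x, y with
         | [], [] => (false, none, [], [])
         | [], h :: t => (false, some h, [], t)
         | h :: t, y => (true, some h, t, y)) := by
  induction N with
  | zero =>
    intro x y hlen
    have hx : x = [] := by cases x <;> simp_all
    have hy : y = [] := by cases y <;> simp_all
    subst hx; subst hy
    constructor
    · intro h; simp at h
    · intro _; simp [sh]
  | succ N ihN =>
    intro x y hlen
    constructor
    · -- Y-mode
      intro cnt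
      have hy : ∃ c t, y = c :: t := by
        cases y with
        | nil => simp at cnt
        | cons c t => exact ⟨c, t, rfl⟩
      obtain ⟨c, t, rfl⟩ := hy
      rcases fin2 c with hc | hc
      · -- c = 0 : switch to X-mode
        subst hc
        have cntX : t.count 0 = x.count 1 := by simpa using cnt
        have hlen' : x.length + t.length ≤ N := by simp at hlen; omega
        have hX := (ihN x t hlen').2 cntX
        refine ⟨0, t, rfl, ?_⟩
        have hsh : sh true x (0 :: t) = 0 :: sh false x t := by simp [sh]
        rw [hsh, G_cons, hX]
        cases x with
        | nil =>
          cases t with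
          | nil => simp [gstep]
          | cons h' t' => simp [gstep]
        | cons p x' => simp [gstep]
      · -- c = 1 : stay in Y-mode
        subst hc
        have cntY : t.count 0 = x.count 1 + 1 := by simpa using cnt
        have hlen' : x.length + t.length ≤ N := by simp at hlen; omega
        obtain ⟨h', t', ht, hY⟩ := (ihN x t hlen').1 cntY
        refine ⟨1, t, rfl, ?_⟩
        have hsh : sh true x (1 :: t) = 1 :: sh true x t := by simp [sh]
        rw [hsh, G_cons, hY, ht]
        simp [gstep]
    · -- X-mode
      intro cnt
      cases x with
      | nil =>
        have hy0 : y.count 0 = 0 := by simpa using cnt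
        have hsh : sh false [] y = y := by cases y <;> simp [sh]
        rw [hsh, G_all1 y hy0]
        cases y <;> rfl
      | cons p x' =>
        rcases fin2 p with hp | hp
        · -- p = 0 : stay X
          subst hp
          have cntX : y.count 0 = x'.count 1 := by simpa using cnt
          have hlen' : x'.length + y.length ≤ N := by simp at hlen; omega
          have hX := (ihN x' y hlen').2 cntX
          have hsh : sh false (0 :: x') y = 0 :: sh false x' y := by simp [sh]
          rw [hsh, G_cons, hX]
          cases x' with
          | nil =>
            cases y with
            | nil => simp [gstep]
            | cons h' t' => simp [gstep]
          | cons p' x'' => simp [gstep]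
        · -- p = 1 : switch to Y
          subst hp
          have cntY : y.count 0 = x'.count 1 + 1 := by simpa using cnt
          have hlen' : x'.length + y.length ≤ N := by simp at hlen; omega
          obtain ⟨h', t', ht, hY⟩ := (ihN x' y hlen').1 cntY
          have hsh : sh false (1 :: x') y = 1 :: sh true x' y := by simp [sh]
          rw [hsh, G_cons, hY, ht]
          simp [gstep]


section DFAsec

variable {Q : Type} (M : DFA (Fin 2) Q)

/-- DFA analogue of the ghost parse state. -/
abbrev PD (Q : Type) := Bool × Option (Fin 2) × (Q → Q) × (Q → Q)

def dstep : PD Q → Fin 2 → PD Q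
  | (ph, none, hx, hy), c => (ph || decide (c = 0), some c, hx, hy)
  | (ph, some p, hx, hy), c =>
      if ph = true ∧ c = 0 then (true, some c, fun q => hx (M.step q p), hy)
      else (ph || decide (c = 0), some c, hx, fun q => hy (M.step q p))

def projL (l : List (Fin 2)) : Q → Q := fun q => M.evalFrom q l

def projS : GS → PD Q := fun s => (s.1, s.2.1, projL M s.2.2.1, projL M s.2.2.2)

lemma projL_cons (p : Fin 2) (l : List (Fin 2)) :
    projL M (p :: l) = fun q => projL M l (M.step q p) := rfl

lemma proj_gstep (s : GS) (c : Fin 2) :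
    projS M (gstep s c) = dstep M (projS M s) c := by
  rcases s with ⟨ph, pend, gx, gy⟩
  cases pend with
  | none => rfl
  | some p =>
    by_cases h : ph = true ∧ c = 0
    · simp only [gstep, dstep, projS, if_pos h]
      rfl
    · simp only [gstep, dstep, projS, if_neg h]
      rfl

lemma foldl_dstep (ρ : List (Fin 2)) : ∀ s : GS,
    List.foldl (dstep M) (projS M s) ρ = projS M (List.foldl gstep s ρ) := by
  induction ρ with
  | nil => intro s; rfl
  | cons c ρ' ih =>
    intro s
    simp only [List.foldl_cons]
    rw [← proj_gstep, ih]

lemma foldl_gstep_eq_G (ρ : List (Fin 2)) :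
    List.foldl gstep (false, none, [], []) ρ = G ρ.reverse := by
  rw [G, List.foldr_reverse]

def pd0 : PD Q := (false, none, id, id)

lemma projS_init : projS M (false, none, [], []) = pd0 := rfl

/-- The embedding `Fin 2 → Fin 3` and retraction. -/
def e12 : Fin 2 → Fin 3 := fun c => ⟨c.val, by omega⟩
def toF2 : Fin 3 → Fin 2 := fun c => if c = 0 then 0 else 1

@[simp] lemma toF2_e12 (c : Fin 2) : toF2 (e12 c) = c := by
  rcases fin2 c with h | h <;> subst h <;> decide

@[simp] lemma e12_ne_two (c : Fin 2) : ¬(e12 c = 2) := by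
  rcases fin2 c with h | h <;> subst h <;> decide

lemma map_e12_toF2 (l : List (Fin 3)) (h : (2 : Fin 3) ∉ l) :
    (l.map toF2).map e12 = l := by
  induction l with
  | nil => rfl
  | cons c l' ih =>
    simp only [List.mem_cons, not_or] at h
    have hc : e12 (toF2 c) = c := by
      have : c = 0 ∨ c = 1 ∨ c = 2 := by omega
      rcases this with h' | h' | h' <;> subst h' <;> first | decide | exact absurd rfl h.1
    simp [hc, ih h.2]

/-- States of the big DFA: `inl 0` = start, `inl 1` = dead, `inr (inl q)` = all-`b`
mode, `inr (inr s)` = parse mode. -/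
abbrev S3 (Q : Type) := Fin 2 ⊕ Q ⊕ PD Q

def D3 : DFA (Fin 3) (S3 Q) where
  step := fun s c =>
    match s with
    | Sum.inl i =>
        if i = 0 then
          if c = 1 then Sum.inr (Sum.inl (M.step M.start 1))
          else if c = 2 then Sum.inr (Sum.inr pd0)
          else Sum.inl 1
        else Sum.inl 1
    | Sum.inr (Sum.inl q) =>
        if c = 1 then Sum.inr (Sum.inl (M.step q 1)) else Sum.inl 1
    | Sum.inr (Sum.inr s') =>
        if c = 2 then Sum.inl 1 else Sum.inr (Sum.inr (dstep M s' (toF2 c)))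
  start := Sum.inl 0
  accept := {s | match s with
    | Sum.inl i => i = 0 ∧ M.start ∈ M.accept
    | Sum.inr (Sum.inl q) => q ∈ M.accept
    | Sum.inr (Sum.inr s') =>
        s'.1 = true ∧ ∃ p, s'.2.1 = some p ∧
          s'.2.2.2 (M.step (M.step (s'.2.2.1 M.start) 1) p) ∈ M.accept}

lemma E0 (l : List (Fin 3)) : List.foldl (D3 M).step (Sum.inl 1) l = Sum.inl 1 := by
  induction l with
  | nil => rfl
  | cons c l' ih => simpa [D3] using ih

lemma E3a (l : List (Fin 3)) : ∀ q, (∀ d ∈ l, d = 1) →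
    List.foldl (D3 M).step (Sum.inr (Sum.inl q)) l
      = Sum.inr (Sum.inl (List.foldl M.step q (l.map toF2))) := by
  induction l with
  | nil => intro q _; rfl
  | cons c l' ih =>
    intro q h
    have hc : c = 1 := h c (by simp)
    subst hc
    have : toF2 1 = 1 := by decide
    simp only [List.foldl_cons, List.map_cons, this]
    rw [show (D3 M).step (Sum.inr (Sum.inl q)) 1 = Sum.inr (Sum.inl (M.step q 1)) from by
      simp [D3]]
    exact ih (M.step q 1) (fun d hd => h d (by simp [hd]))

lemma E3b (l : List (Fin 3)) : ∀ q, (∃ d ∈ l, d ≠ 1) →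
    List.foldl (D3 M).step (Sum.inr (Sum.inl q)) l = Sum.inl 1 := by
  induction l with
  | nil => intro q h; simp at h
  | cons c l' ih =>
    intro q h
    by_cases hc : c = 1
    · subst hc
      obtain ⟨d, hd, hd1⟩ := h
      rcases List.mem_cons.mp hd with hd | hd
      · exact absurd hd hd1
      · simp only [List.foldl_cons]
        rw [show (D3 M).step (Sum.inr (Sum.inl q)) 1 = Sum.inr (Sum.inl (M.step q 1)) from by
          simp [D3]]
        exact ih _ ⟨d, hd, hd1⟩
    · simp only [List.foldl_cons]
      rw [show (D3 M).step (Sum.inr (Sum.inl q)) c = Sum.inl 1 from by simp [D3, hc]]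
      exact E0 M l'
  termination_by l.length

lemma E4a (l : List (Fin 3)) : ∀ s, (2 : Fin 3) ∉ l →
    List.foldl (D3 M).step (Sum.inr (Sum.inr s)) l
      = Sum.inr (Sum.inr (List.foldl (dstep M) s (l.map toF2))) := by
  induction l with
  | nil => intro s _; rfl
  | cons c l' ih =>
    intro s h
    simp only [List.mem_cons, not_or] at h
    simp only [List.foldl_cons, List.map_cons]
    rw [show (D3 M).step (Sum.inr (Sum.inr s)) c = Sum.inr (Sum.inr (dstep M s (toF2 c))) from by
      simp [D3, Ne.symm h.1]]
    exact ih _ h.2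

lemma E4b (l : List (Fin 3)) : ∀ s, (2 : Fin 3) ∈ l →
    List.foldl (D3 M).step (Sum.inr (Sum.inr s)) l = Sum.inl 1 := by
  induction l with
  | nil => intro s h; simp at h
  | cons c l' ih =>
    intro s h
    by_cases hc : c = 2
    · subst hc
      simp only [List.foldl_cons]
      rw [show (D3 M).step (Sum.inr (Sum.inr s)) 2 = Sum.inl 1 from by simp [D3]]
      exact E0 M l'
    · rcases List.mem_cons.mp h with h | h
      · exact absurd h.symm hc
      · simp only [List.foldl_cons]
        rw [show (D3 M).step (Sum.inr (Sum.inr s)) c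
            = Sum.inr (Sum.inr (dstep M s (toF2 c))) from by simp [D3, hc]]
        exact ih _ h

end DFAsec


lemma count_add_len (x : List (Fin 2)) : x.count 0 + x.count 1 = x.length := by
  induction x with
  | nil => simp
  | cons c t ih => rcases fin2 c with h | h <;> subst h <;> simp <;> omega

/-- The length-preserving encoding of `LRCM ∩ R` into words over `Fin 3`. -/
def Phi : List (Fin 2) → List (Fin 3) := fun w =>
  if w.count 0 = 0 then w.map e12
  else 2 :: ((sh true (w.take (w.count 0 - 1)) (w.drop (w.count 0))).reverse.map e12)

lemma map_toF2_e12 (l : List (Fin 2)) : (l.map e12).map toF2 = l := by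
  induction l with
  | nil => rfl
  | cons c t ih => simp [ih]

lemma e12_inj : Function.Injective e12 := by decide

/-- Decomposition of a word in the `k ≥ 1` part of `LRCM`. -/
lemma decomp (w : List (Fin 2)) (hk : 1 ≤ w.count 0) (hb : w[w.count 0 - 1]? = some 1) :
    w = w.take (w.count 0 - 1) ++ 1 :: w.drop (w.count 0) ∧
    (w.take (w.count 0 - 1)).length = w.count 0 - 1 ∧
    (w.drop (w.count 0)).count 0 = (w.take (w.count 0 - 1)).count 1 + 1 := by
  have hkl : w.count 0 ≤ w.length := List.count_le_length
  have hlt : w.count 0 - 1 < w.length := by omega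
  have hget : w[w.count 0 - 1] = 1 := by
    rw [List.getElem?_eq_getElem hlt] at hb
    exact Option.some.inj hb
  have hdrop : w.drop (w.count 0 - 1) = 1 :: w.drop (w.count 0) := by
    rw [List.drop_eq_getElem_cons hlt, hget]
    congr 2
    omega
  have hw : w = w.take (w.count 0 - 1) ++ 1 :: w.drop (w.count 0) := by
    conv_lhs => rw [← List.take_append_drop (w.count 0 - 1) w]
    rw [hdrop]
  have hlen : (w.take (w.count 0 - 1)).length = w.count 0 - 1 := by
    rw [List.length_take]; omega
  refine ⟨hw, hlen, ?_⟩
  have hcnt : w.count 0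
      = (w.take (w.count 0 - 1)).count 0 + (w.drop (w.count 0)).count 0 := by
    conv_lhs => rw [hw]
    simp [List.count_append]
  have := count_add_len (w.take (w.count 0 - 1))
  omega

section DFAsec2

variable {Q : Type} (M : DFA (Fin 2) Q)

lemma evalM_decomp (x y : List (Fin 2)) (p : Fin 2) (s : Q) :
    M.evalFrom s (x ++ 1 :: p :: y) = M.evalFrom (M.step (M.step (M.evalFrom s x) 1) p) y := by
  rw [DFA.evalFrom_of_append]
  rfl

lemma eval_two (σ : List (Fin 2)) :
    (D3 M).eval ((2 : Fin 3) :: (σ.reverse.map e12)) = Sum.inr (Sum.inr (projS M (G σ))) := by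
  show List.foldl (D3 M).step ((D3 M).step (Sum.inl 0) 2) (σ.reverse.map e12) = _
  rw [show (D3 M).step (Sum.inl 0) 2 = Sum.inr (Sum.inr pd0) from by simp [D3]]
  rw [E4a M _ pd0 (by
    intro h
    obtain ⟨c, _, hc⟩ := List.mem_map.mp h
    exact e12_ne_two c hc)]
  rw [map_toF2_e12, ← projS_init M, foldl_dstep, foldl_gstep_eq_G, List.reverse_reverse]

lemma eval_ones (w : List (Fin 2)) (h : w.count 0 = 0) :
    ((D3 M).eval (w.map e12) ∈ (D3 M).accept) ↔ (M.eval w ∈ M.accept) := by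
  cases w with
  | nil =>
    show (Sum.inl 0 ∈ (D3 M).accept) ↔ _
    show ((0 : Fin 2) = 0 ∧ M.start ∈ M.accept) ↔ _
    simp [DFA.eval]
  | cons c w' =>
    have hc : c = 1 := by
      rcases fin2 c with h' | h'
      · subst h'; simp at h
      · exact h'
    subst hc
    have hw' : w'.count 0 = 0 := by simpa using h
    have h1 : e12 1 = 1 := by decide
    show List.foldl (D3 M).step ((D3 M).step (Sum.inl 0) (e12 1)) (w'.map e12) ∈ _ ↔ _
    rw [h1, show (D3 M).step (Sum.inl 0) 1 = Sum.inr (Sum.inl (M.step M.start 1)) from by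
      simp [D3]]
    rw [E3a M _ _ (by
      intro d hd
      obtain ⟨c', hc', rfl⟩ := List.mem_map.mp hd
      have : c' = 1 := by
        rcases fin2 c' with h' | h'
        · subst h'; rw [List.count_eq_zero] at hw'; exact absurd hc' hw'
        · exact h'
      subst this; decide)]
    rw [map_toF2_e12]
    rfl

/-- Forward direction: `Phi` maps `LRCM`-words to accepted words iff they are in the
DFA language, preserving length. -/
lemma phi_spec (w : List (Fin 2)) (hw : w ∈ LRCM) :
    ((Phi w ∈ (D3 M).accepts) ↔ w ∈ M.accepts) ∧ (Phi w).length = w.length := by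
  by_cases hk : w.count 0 = 0
  · rw [Phi, if_pos hk]
    constructor
    · rw [DFA.mem_accepts, DFA.mem_accepts]
      exact eval_ones M w hk
    · simp
  · have hk1 : 1 ≤ w.count 0 := by omega
    have hb : w[w.count 0 - 1]? = some 1 := by
      rcases hw with h | ⟨_, h⟩
      · exact absurd h hk
      · exact h
    obtain ⟨hw', hlen, hcnt⟩ := decomp w hk1 hb
    set x := w.take (w.count 0 - 1) with hx
    set y := w.drop (w.count 0) with hy
    obtain ⟨h', t', hyt, hG⟩ := (L1 (x.length + y.length) x y le_rfl).1 hcnt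
    rw [Phi, if_neg hk]
    constructor
    · rw [DFA.mem_accepts, eval_two]
      show (projS M (G (sh true x y))).1 = true ∧ _ ↔ _
      rw [hG]
      constructor
      · rintro ⟨-, p, hp, hacc⟩
        have hph' : p = h' := by
          have : some h' = some p := hp
          exact (Option.some.inj this).symm
        subst hph'
        rw [DFA.mem_accepts]
        show M.evalFrom M.start w ∈ M.accept
        rw [hw', hyt, evalM_decomp]
        exact hacc
      · intro hacc
        refine ⟨rfl, h', rfl, ?_⟩
        rw [DFA.mem_accepts] at hacc
        show M.evalFrom (M.step (M.step (M.evalFrom M.start x) 1) h') t' ∈ M.accept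
        rw [← evalM_decomp, ← hyt, ← hw']
        exact hacc
    · have hkl : w.count 0 ≤ w.length := List.count_le_length
      have hyl : y.length = w.length - w.count 0 := by rw [hy, List.length_drop]
      have hxl : x.length = w.count 0 - 1 := hlen
      rw [← hx, ← hy]
      simp only [List.length_cons, List.length_map, List.length_reverse, sh_length]
      omega

/-- Injectivity of `Phi` on `LRCM`. -/
lemma phi_inj (w1 w2 : List (Fin 2)) (h1 : w1 ∈ LRCM) (h2 : w2 ∈ LRCM)
    (he : Phi w1 = Phi w2) : w1 = w2 := by
  have key : ∀ w : List (Fin 2), w.count 0 ≠ 0 → w ∈ LRCM →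
      w = w.take (w.count 0 - 1) ++ 1 :: w.drop (w.count 0) ∧
      (w.drop (w.count 0)).count 0 = (w.take (w.count 0 - 1)).count 1 + 1 := by
    intro w hk hw
    have hb : w[w.count 0 - 1]? = some 1 := by
      rcases hw with h | ⟨_, h⟩
      · exact absurd h hk
      · exact h
    obtain ⟨a, _, c⟩ := decomp w (by omega) hb
    exact ⟨a, c⟩
  by_cases hk1 : w1.count 0 = 0 <;> by_cases hk2 : w2.count 0 = 0
  · rw [Phi, if_pos hk1, Phi, if_pos hk2] at he
    exact List.map_injective_iff.mpr e12_inj he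
  · rw [Phi, if_pos hk1, Phi, if_neg hk2] at he
    cases w1 with
    | nil => simp at he
    | cons c w' =>
      simp only [List.map_cons] at he
      have : e12 c = 2 := (List.cons.injEq _ _ _ _ ▸ he).1
      exact absurd this (e12_ne_two c)
  · rw [Phi, if_neg hk1, Phi, if_pos hk2] at he
    cases w2 with
    | nil => simp at he
    | cons c w' =>
      simp only [List.map_cons] at he
      have : (2 : Fin 3) = e12 c := (List.cons.injEq _ _ _ _ ▸ he).1
      exact absurd this.symm (e12_ne_two c)
  · rw [Phi, if_neg hk1, Phi, if_neg hk2] at he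
    obtain ⟨hw1, hc1⟩ := key w1 hk1 h1
    obtain ⟨hw2, hc2⟩ := key w2 hk2 h2
    set x1 := w1.take (w1.count 0 - 1)
    set y1 := w1.drop (w1.count 0)
    set x2 := w2.take (w2.count 0 - 1)
    set y2 := w2.drop (w2.count 0)
    have hσ : sh true x1 y1 = sh true x2 y2 := by
      have := (List.cons.injEq _ _ _ _ ▸ he).2
      have := List.map_injective_iff.mpr e12_inj this
      exact List.reverse_injective this
    obtain ⟨a1, b1, hy1, hG1⟩ := (L1 (x1.length + y1.length) x1 y1 le_rfl).1 hc1
    obtain ⟨a2, b2, hy2, hG2⟩ := (L1 (x2.length + y2.length) x2 y2 le_rfl).1 hc2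
    rw [hσ, hG2] at hG1
    obtain ⟨ha, hx, hb⟩ : some a1 = some a2 ∧ x1 = x2 ∧ b1 = b2 := by
      simpa [Prod.ext_iff] using hG1.symm
    rw [hw1, hw2, hy1, hy2, hx, Option.some.inj ha, hb]

lemma phi_surj (v : List (Fin 3)) (hv : v ∈ (D3 M).accepts) :
    ∃ w, w ∈ LRCM ∧ w ∈ M.accepts ∧ Phi w = v ∧ w.length = v.length := by
  rw [DFA.mem_accepts] at hv
  cases v with
  | nil =>
    refine ⟨[], Or.inl rfl, ?_, ?_, rfl⟩
    · rw [DFA.mem_accepts]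
      have h' : (0:Fin 2) = 0 ∧ M.start ∈ M.accept := hv
      exact h'.2
    · rw [Phi]; simp
  | cons c v' =>
    have hc3 : c = 0 ∨ c = 1 ∨ c = 2 := by omega
    rcases hc3 with hc | hc | hc
    · subst hc
      exfalso
      have hev : (D3 M).eval (0 :: v') = Sum.inl 1 := by
        show List.foldl (D3 M).step ((D3 M).step (Sum.inl 0) 0) v' = _
        rw [show (D3 M).step (Sum.inl 0) 0 = Sum.inl 1 from by simp [D3]]
        exact E0 M v'
      rw [hev] at hv
      have h' : (1:Fin 2) = 0 ∧ M.start ∈ M.accept := hv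
      exact absurd h'.1 (by decide)
    · subst hc
      by_cases hall : ∀ d ∈ v', d = (1:Fin 3)
      · have h2v : (2 : Fin 3) ∉ v' := fun h => by simpa using hall 2 h
        have hmapv : (v'.map toF2).map e12 = v' := map_e12_toF2 v' h2v
        refine ⟨(1:Fin 2) :: v'.map toF2, ?_, ?_, ?_, by simp⟩
        · left
          rw [List.count_eq_zero]
          intro hmem
          rcases List.mem_cons.mp hmem with h | h
          · exact absurd h (by decide)
          · obtain ⟨d, hd, hd'⟩ := List.mem_map.mp h
            rw [hall d hd] at hd'
            exact absurd hd' (by decide)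
        · have hcnt : ((1:Fin 2) :: v'.map toF2).count 0 = 0 := by
            rw [List.count_eq_zero]
            intro hmem
            rcases List.mem_cons.mp hmem with h | h
            · exact absurd h (by decide)
            · obtain ⟨d, hd, hd'⟩ := List.mem_map.mp h
              rw [hall d hd] at hd'
              exact absurd hd' (by decide)
          rw [DFA.mem_accepts]
          have hmap : ((1:Fin 2) :: v'.map toF2).map e12 = 1 :: v' := by
            simp only [List.map_cons, hmapv]
            congr 1
          exact (eval_ones M _ hcnt).mp (by rw [hmap]; exact hv)
        · have hcnt : ((1:Fin 2) :: v'.map toF2).count 0 = 0 := by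
            rw [List.count_eq_zero]
            intro hmem
            rcases List.mem_cons.mp hmem with h | h
            · exact absurd h (by decide)
            · obtain ⟨d, hd, hd'⟩ := List.mem_map.mp h
              rw [hall d hd] at hd'
              exact absurd hd' (by decide)
          rw [Phi, if_pos hcnt]
          simp only [List.map_cons, hmapv]
          congr 1
      · exfalso
        have hex : ∃ d ∈ v', d ≠ (1:Fin 3) := by push_neg at hall; exact hall
        have hev : (D3 M).eval (1 :: v') = Sum.inl 1 := by
          show List.foldl (D3 M).step ((D3 M).step (Sum.inl 0) 1) v' = _
          rw [show (D3 M).step (Sum.inl 0) 1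
              = Sum.inr (Sum.inl (M.step M.start 1)) from by simp [D3]]
          exact E3b M v' _ hex
        rw [hev] at hv
        have h' : (1:Fin 2) = 0 ∧ M.start ∈ M.accept := hv
        exact absurd h'.1 (by decide)
    · subst hc
      by_cases h2 : (2:Fin 3) ∈ v'
      · exfalso
        have hev : (D3 M).eval (2 :: v') = Sum.inl 1 := by
          show List.foldl (D3 M).step ((D3 M).step (Sum.inl 0) 2) v' = _
          rw [show (D3 M).step (Sum.inl 0) 2 = Sum.inr (Sum.inr pd0) from by simp [D3]]
          exact E4b M v' _ h2
        rw [hev] at hv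
        have h' : (1:Fin 2) = 0 ∧ M.start ∈ M.accept := hv
        exact absurd h'.1 (by decide)
      · have hv'eq : v' = ((v'.map toF2).reverse).reverse.map e12 := by
          rw [List.reverse_reverse, map_e12_toF2 v' h2]
        have hev : (D3 M).eval (2 :: v')
            = Sum.inr (Sum.inr (projS M (G (v'.map toF2).reverse))) := by
          conv_lhs => rw [hv'eq]
          exact eval_two M _
        rw [hev] at hv
        set σ := (v'.map toF2).reverse with hσdef
        have hacc : (projS M (G σ)).1 = true ∧ ∃ p, (projS M (G σ)).2.1 = some p ∧
            (projS M (G σ)).2.2.2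
              (M.step (M.step ((projS M (G σ)).2.2.1 M.start) 1) p) ∈ M.accept := hv
        obtain ⟨hph, p, hp, hQ⟩ := hacc
        have hph' : (G σ).1 = true := hph
        have hp' : (G σ).2.1 = some p := hp
        obtain ⟨cA1, cA2, cA3, -⟩ := claimA σ
        have h0σ : (0:Fin 2) ∈ σ := cA1.mp hph'
        have hsh : sh true (G σ).2.2.1 (p :: (G σ).2.2.2) = σ := by
          have h := cA2
          rw [hp'] at h
          exact h
        have hcnt : (p :: (G σ).2.2.2).count 0 = (G σ).2.2.1.count 1 + 1 := by
          have h := cA3 h0σ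
          rw [hp'] at h
          exact h
        set gx := (G σ).2.2.1 with hgx
        set gy := (G σ).2.2.2 with hgy
        have hwc : (gx ++ 1 :: p :: gy).count 0 = gx.length + 1 := by
          have hl := count_add_len gx
          have h' : (gx ++ 1 :: p :: gy).count 0 = gx.count 0 + (p :: gy).count 0 := by
            simp [List.count_append]
          omega
        have hlens : σ.length = gx.length + 1 + gy.length := by
          rw [← hsh, sh_length]
          simp
          omega
        refine ⟨gx ++ 1 :: p :: gy, ?_, ?_, ?_, ?_⟩
        · right
          refine ⟨by omega, ?_⟩
          rw [hwc]
          simp only [Nat.add_sub_cancel]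
          rw [List.getElem?_append_right (le_refl gx.length)]
          simp
        · rw [DFA.mem_accepts]
          show M.evalFrom M.start (gx ++ 1 :: p :: gy) ∈ M.accept
          rw [evalM_decomp]
          exact hQ
        · rw [Phi, if_neg (by omega)]
          have ht : (gx ++ 1 :: p :: gy).take ((gx ++ 1 :: p :: gy).count 0 - 1) = gx := by
            rw [hwc]
            simp only [Nat.add_sub_cancel]
            exact List.take_left' rfl
          have hd : (gx ++ 1 :: p :: gy).drop ((gx ++ 1 :: p :: gy).count 0) = p :: gy := by
            rw [hwc, show gx ++ 1 :: p :: gy = (gx ++ [1]) ++ p :: gy by simp]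
            exact List.drop_left' (by simp)
          rw [ht, hd, hsh, hσdef, List.reverse_reverse, map_e12_toF2 v' h2]
        · have hvl : v'.length = σ.length := by rw [hσdef]; simp
          simp only [List.length_append, List.length_cons]
          omega

end DFAsec2

lemma main_count {Q : Type} (M : DFA (Fin 2) Q) (R : Set (List (Fin 2)))
    (hM : ∀ w, w ∈ M.accepts ↔ w ∈ R) (n : ℕ) :
    countFn (D3 M).accepts n = countFn (LRCM ∩ R) n := by
  have hbij : Set.BijOn Phi {w | w ∈ LRCM ∩ R ∧ w.length = n}
      {v | v ∈ (D3 M).accepts ∧ v.length = n} := by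
    refine ⟨?_, ?_, ?_⟩
    · rintro w ⟨⟨hL, hR⟩, hn⟩
      obtain ⟨hiff, hlen⟩ := phi_spec M w hL
      exact ⟨hiff.mpr ((hM w).mpr hR), by rw [hlen, hn]⟩
    · rintro w1 ⟨⟨h1, _⟩, _⟩ w2 ⟨⟨h2, _⟩, _⟩ he
      exact phi_inj w1 w2 h1 h2 he
    · rintro v ⟨hv, hn⟩
      obtain ⟨w, hL, hAcc, hPhi, hlen⟩ := phi_surj M v hv
      exact ⟨w, ⟨⟨hL, (hM w).mp hAcc⟩, by omega⟩, hPhi⟩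
  unfold countFn
  have h := Set.ncard_image_of_injOn hbij.injOn
  rw [hbij.image_eq] at h
  exact h

end SCR

/-- `L_RCM` is strongly counting-regular. -/
theorem stmt6 :
    ∀ R : Set (List (Fin 2)), IsRegularLang R → CountingRegular (LRCM ∩ R) := by
  intro R hR
  obtain ⟨Q, instQ, M, hM⟩ := hR
  letI := instQ
  letI : DecidableEq Q := Classical.decEq Q
  exact ⟨Fin 3, inferInstance, (SCR.D3 M).accepts,
    ⟨SCR.S3 Q, inferInstance, SCR.D3 M, fun w => Iff.rfl⟩,
    fun n => SCR.main_count M R hM n⟩
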